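/- Assume J is integrable, i.e. w₀ = 0 and D∘J' = J'∘D. Then J is harmonic if and only if Dv₀ = (Tr D)·v₀. -/

import Mathlib

open scoped BigOperators
open Matrix

noncomputable section

/-- The underlying `2n`-dimensional real vector space `ℝ^{2n}`, whose standard basis
plays the role of the orthonormal basis `e₀, e₁, …, e_{2n-1}`. -/
abbrev G (n : ℕ) := Fin (2*n) → ℝ

/-- The inner product `⟨·,·⟩` making the standard basis orthonormal. -/
def inn {n : ℕ} (x y : G n) : ℝ := ∑ i, x i * y i

/-- The standard basis vector `e k` (indexed by a natural number `k`). -/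
def E (n : ℕ) (k : ℕ) : G n := fun i => if (i : ℕ) = k then 1 else 0

/-- Membership in `a = span{e₂, …, e_{2n-1}}`. -/
def inA {n : ℕ} (x : G n) : Prop := ∀ i : Fin (2*n), (i : ℕ) < 2 → x i = 0

/-- The orthogonal almost complex structure `J e_{2i} = e_{2i+1}`, `J e_{2i+1} = -e_{2i}`. -/
def Jm (n : ℕ) : Matrix (Fin (2*n)) (Fin (2*n)) ℝ :=
  Matrix.of fun k l =>
    if (k : ℕ) = (l : ℕ) + 1 ∧ Even (l : ℕ) then (1 : ℝ)
    else if (l : ℕ) = (k : ℕ) + 1 ∧ Even (k : ℕ) then -1 else 0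

/-- `D` is (the extension by zero of) an endomorphism of `a`: it vanishes on
`span{e₀, e₁}` and takes values orthogonal to `span{e₀, e₁}`. -/
def DinA {n : ℕ} (D : Matrix (Fin (2*n)) (Fin (2*n)) ℝ) : Prop :=
  ∀ k l : Fin (2*n), ((k : ℕ) < 2 ∨ (l : ℕ) < 2) → D k l = 0

/-- The matrix of `L` determined by the data `μ, v₀, w₀, D`, i.e.
`L e₀ = 0`, `L e₁ = μ e₁ + v₀` and `L x = ⟨w₀, x⟩ e₁ + D x` for `x ∈ a`
(for `v₀, w₀ ∈ a` and `D` an endomorphism of `a`). -/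
def Lm {n : ℕ} (μ : ℝ) (v₀ w₀ : G n) (D : Matrix (Fin (2*n)) (Fin (2*n)) ℝ) :
    Matrix (Fin (2*n)) (Fin (2*n)) ℝ :=
  Matrix.of fun k l =>
    (if (k : ℕ) = 1 ∧ (l : ℕ) = 1 then μ else 0)
      + (if (l : ℕ) = 1 then v₀ k else 0)
      + (if (k : ℕ) = 1 then w₀ l else 0)
      + D k l

/-- The Lie bracket of the almost abelian Lie algebra `g = ℝ e₀ ⋉_L u`:
`[e₀, u] = L u` for `u ∈ u = span{e₁, …, e_{2n-1}}` and `[u, v] = 0` for `u, v ∈ u`. -/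
def br {n : ℕ} (L : Matrix (Fin (2*n)) (Fin (2*n)) ℝ) (x y : G n) : G n :=
  inn x (E n 0) • L.mulVec y - inn y (E n 0) • L.mulVec x

/-- `nabla` is the Levi-Civita connection of `⟨·,·⟩`, i.e. it satisfies the Koszul
formula `2⟨∇_x y, z⟩ = ⟨[x,y],z⟩ − ⟨[y,z],x⟩ + ⟨[z,x],y⟩`. -/
def Koszul {n : ℕ} (L : Matrix (Fin (2*n)) (Fin (2*n)) ℝ) (nabla : G n → G n → G n) : Prop :=
  ∀ x y z : G n, 2 * inn (nabla x y) z
    = inn (br L x y) z - inn (br L y z) x + inn (br L z x) y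

/-- `(∇_y J)(x) = ∇_y (Jx) − J ∇_y x`. -/
def covJ {n : ℕ} (nabla : G n → G n → G n) (y x : G n) : G n :=
  nabla y ((Jm n).mulVec x) - (Jm n).mulVec (nabla y x)

/-- The rough Laplacian
`(∇*∇J)(x) = Σ_i ((∇_{e_i}(∇_{e_i}J))(x) − (∇_{∇_{e_i}e_i} J)(x))`. -/
def roughLap {n : ℕ} (nabla : G n → G n → G n) (x : G n) : G n :=
  ∑ i : Fin (2*n),
    (nabla (E n i.val) (covJ nabla (E n i.val) x)
      - covJ nabla (E n i.val) (nabla (E n i.val) x)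
      - covJ nabla (nabla (E n i.val) (E n i.val)) x)

/-- `J` is harmonic: `J ∘ (∇*∇J) = (∇*∇J) ∘ J`. -/
def Harmonic {n : ℕ} (nabla : G n → G n → G n) : Prop :=
  ∀ x : G n, (Jm n).mulVec (roughLap nabla x) = roughLap nabla ((Jm n).mulVec x)

/-- Symmetric part of a matrix. -/
def symPart {n : ℕ} (M : Matrix (Fin (2*n)) (Fin (2*n)) ℝ) :
    Matrix (Fin (2*n)) (Fin (2*n)) ℝ := (1/2 : ℝ) • (M + Mᵀ)

/-- Skew-symmetric part of a matrix. -/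
def skewPart {n : ℕ} (M : Matrix (Fin (2*n)) (Fin (2*n)) ℝ) :
    Matrix (Fin (2*n)) (Fin (2*n)) ℝ := (1/2 : ℝ) • (M - Mᵀ)

/-- `γ = (v₀ + w₀)/2`. -/
def gam {n : ℕ} (v₀ w₀ : G n) : G n := (1/2 : ℝ) • (v₀ + w₀)

/-- `ρ = (v₀ − w₀)/2`. -/
def rho {n : ℕ} (v₀ w₀ : G n) : G n := (1/2 : ℝ) • (v₀ - w₀)

/-- The fundamental 2-form `ω(x,y) = ⟨Jx, y⟩`. -/
def om {n : ℕ} (x y : G n) : ℝ := inn ((Jm n).mulVec x) y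

/-- `(∇_x ω)(y,z) = −ω(∇_x y, z) − ω(y, ∇_x z)`. -/
def nablaOm {n : ℕ} (nabla : G n → G n → G n) (x y z : G n) : ℝ :=
  - om (nabla x y) z - om y (nabla x z)

/-- `dω(x,y,z) = −ω([x,y],z) − ω([y,z],x) − ω([z,x],y)`. -/
def dOm {n : ℕ} (L : Matrix (Fin (2*n)) (Fin (2*n)) ℝ) (x y z : G n) : ℝ :=
  - om (br L x y) z - om (br L y z) x - om (br L z x) y

/-- The codifferential `δω(x) = −Σ_i (∇_{e_i}ω)(e_i, x)`. -/
def deltaOm {n : ℕ} (nabla : G n → G n → G n) (x : G n) : ℝ :=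
  - ∑ i : Fin (2*n), nablaOm nabla (E n i.val) (E n i.val) x

/-- The Nijenhuis tensor `N(x,y) = [x,y] + J([Jx,y] + [x,Jy]) − [Jx,Jy]`. -/
def Nij {n : ℕ} (L : Matrix (Fin (2*n)) (Fin (2*n)) ℝ) (x y : G n) : G n :=
  br L x y
    + (Jm n).mulVec (br L ((Jm n).mulVec x) y + br L x ((Jm n).mulVec y))
    - br L ((Jm n).mulVec x) ((Jm n).mulVec y)

/-- `T⁻(x,y,z) = (∇_x ω)(y,z) − (∇_{Jx} ω)(Jy,z)`. -/
def Tminus {n : ℕ} (nabla : G n → G n → G n) (x y z : G n) : ℝ :=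
  nablaOm nabla x y z - nablaOm nabla ((Jm n).mulVec x) ((Jm n).mulVec y) z

/-- `T⁺(x,y,z) = (∇_x ω)(y,z) + (∇_{Jx} ω)(Jy,z)`. -/
def Tplus {n : ℕ} (nabla : G n → G n → G n) (x y z : G n) : ℝ :=
  nablaOm nabla x y z + nablaOm nabla ((Jm n).mulVec x) ((Jm n).mulVec y) z

/-- `U(x,y,z) = ⟨x,y⟩δω(z) − ⟨x,z⟩δω(y) − ⟨x,Jy⟩δω(Jz) + ⟨x,Jz⟩δω(Jy)`. -/
def Uten {n : ℕ} (nabla : G n → G n → G n) (x y z : G n) : ℝ :=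
  inn x y * deltaOm nabla z - inn x z * deltaOm nabla y
    - inn x ((Jm n).mulVec y) * deltaOm nabla ((Jm n).mulVec z)
    + inn x ((Jm n).mulVec z) * deltaOm nabla ((Jm n).mulVec y)

/-- The Lee form `θ(x) = −(1/(n−1)) δω(Jx)`. -/
def Lee {n : ℕ} (nabla : G n → G n → G n) (x : G n) : ℝ :=
  -(1/((n : ℝ) - 1)) * deltaOm nabla ((Jm n).mulVec x)

/-- The identity of `a`, extended by zero to `g`. -/
def Ia (n : ℕ) : Matrix (Fin (2*n)) (Fin (2*n)) ℝ :=
  Matrix.of fun k l => if k = l ∧ 2 ≤ (k : ℕ) then (1 : ℝ) else 0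


namespace S3
open Matrix

variable {n : ℕ}

lemma E_dot (k : ℕ) (h : k < 2*n) (x : G n) : E n k ⬝ᵥ x = x ⟨k, h⟩ := by
  simp only [dotProduct, E]
  rw [Finset.sum_eq_single (⟨k, h⟩ : Fin (2*n))]
  · simp
  · intro b _ hb
    have : (b : ℕ) ≠ k := fun hc => hb (Fin.ext hc)
    simp [this]
  · simp

lemma dot_E (k : ℕ) (h : k < 2*n) (x : G n) : x ⬝ᵥ E n k = x ⟨k, h⟩ := by
  rw [dotProduct_comm]; exact E_dot k h x

lemma E_dot' (i : Fin (2*n)) (x : G n) : E n ↑i ⬝ᵥ x = x i := by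
  rw [E_dot i.1 i.2]

lemma dot_E' (i : Fin (2*n)) (x : G n) : x ⬝ᵥ E n ↑i = x i := by
  rw [dot_E i.1 i.2]

lemma mulVec_E (M : Matrix (Fin (2*n)) (Fin (2*n)) ℝ) (k : ℕ) (h : k < 2*n) :
    M *ᵥ E n k = fun j => M j ⟨k, h⟩ := by
  funext j
  exact dot_E k h (M j)

lemma mulVec_E' (M : Matrix (Fin (2*n)) (Fin (2*n)) ℝ) (i : Fin (2*n)) :
    M *ᵥ E n ↑i = fun j => M j i := by
  rw [mulVec_E M i.1 i.2]

/-- matrices are equal if all columns agree -/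
lemma ext_col {M N : Matrix (Fin (2*n)) (Fin (2*n)) ℝ}
    (h : ∀ i : Fin (2*n), M *ᵥ E n ↑i = N *ᵥ E n ↑i) : M = N := by
  ext k l
  have := congrFun (h l) k
  rwa [mulVec_E', mulVec_E'] at this

/- vecMulVec algebra -/
lemma vmv_vmv (a b c d : G n) :
    vecMulVec a b * vecMulVec c d = (b ⬝ᵥ c) • vecMulVec a d := by
  ext k l
  simp [Matrix.mul_apply, vecMulVec_apply, dotProduct, Finset.mul_sum, Finset.sum_mul]
  congr 1; funext m; ring

lemma mul_vmv (M : Matrix (Fin (2*n)) (Fin (2*n)) ℝ) (a b : G n) :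
    M * vecMulVec a b = vecMulVec (M *ᵥ a) b := by
  ext k l
  simp [Matrix.mul_apply, vecMulVec_apply, mulVec, dotProduct, Finset.sum_mul]
  congr 1; funext m; ring

lemma vmv_mul (M : Matrix (Fin (2*n)) (Fin (2*n)) ℝ) (a b : G n) :
    vecMulVec a b * M = vecMulVec a (Mᵀ *ᵥ b) := by
  ext k l
  simp [Matrix.mul_apply, vecMulVec_apply, mulVec, dotProduct, Finset.mul_sum,
    Matrix.transpose_apply]
  congr 1; funext m; ring

lemma vmv_add_right (a b c : G n) :
    vecMulVec a (b + c) = vecMulVec a b + vecMulVec a c := by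
  ext k l; simp [vecMulVec_apply]; ring

lemma vmv_add_left (a b c : G n) :
    vecMulVec (a + b) c = vecMulVec a c + vecMulVec b c := by
  ext k l; simp [vecMulVec_apply]; ring

lemma vmv_smul_right (r : ℝ) (a b : G n) :
    vecMulVec a (r • b) = r • vecMulVec a b := by
  ext k l; simp [vecMulVec_apply]; ring

lemma vmv_smul_left (r : ℝ) (a b : G n) :
    vecMulVec (r • a) b = r • vecMulVec a b := by
  ext k l; simp [vecMulVec_apply]; ring

lemma vmv_zero_right (a : G n) : vecMulVec a (0 : G n) = 0 := by
  ext k l; simp [vecMulVec_apply]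

lemma vmv_zero_left (a : G n) : vecMulVec (0 : G n) a = 0 := by
  ext k l; simp [vecMulVec_apply]

lemma vmv_neg_right (a b : G n) : vecMulVec a (-b) = -vecMulVec a b := by
  ext k l; simp [vecMulVec_apply]

lemma vmv_mulVec (a b x : G n) : vecMulVec a b *ᵥ x = (b ⬝ᵥ x) • a := by
  funext k
  simp [mulVec, vecMulVec_apply, dotProduct, Finset.mul_sum, Finset.sum_mul]
  congr 1; funext m; ring

lemma trace_vmv (a b : G n) : Matrix.trace (vecMulVec a b) = a ⬝ᵥ b := by
  simp [Matrix.trace, Matrix.diag, vecMulVec_apply, dotProduct]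

lemma sum_vmv (M N : Matrix (Fin (2*n)) (Fin (2*n)) ℝ) :
    ∑ i : Fin (2*n), vecMulVec (M *ᵥ E n ↑i) (N *ᵥ E n ↑i) = M * Nᵀ := by
  ext k l
  rw [Matrix.sum_apply]  -- maybe Matrix.sum_apply
  simp [mulVec_E', vecMulVec_apply, Matrix.mul_apply, Matrix.transpose_apply]

lemma sum_smul_mulVec (M : Matrix (Fin (2*n)) (Fin (2*n)) ℝ) (w : G n) :
    ∑ i : Fin (2*n), (w i) • (M *ᵥ E n ↑i) = M *ᵥ w := by
  funext k
  rw [Finset.sum_apply]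
  simp [mulVec_E', mulVec, dotProduct, mul_comm]

end S3
namespace S3
open Matrix
variable {n : ℕ}

lemma J_apply (k l : Fin (2*n)) : Jm n k l =
    if (k : ℕ) = (l : ℕ) + 1 ∧ Even (l : ℕ) then (1 : ℝ)
    else if (l : ℕ) = (k : ℕ) + 1 ∧ Even (k : ℕ) then -1 else 0 := rfl

lemma Jcol_even (j : ℕ) (hj : j < 2*n) (h : Even j) : Jm n *ᵥ E n j = E n (j+1) := by
  rw [mulVec_E _ j hj]
  funext k
  rw [J_apply]
  simp only [E]
  by_cases hk : (k : ℕ) = j + 1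
  · rw [if_pos ⟨hk, h⟩, if_pos hk]
  · rw [if_neg (fun hc => hk hc.1), if_neg hk, if_neg ?_]
    rintro ⟨ha, hb⟩
    rw [Nat.even_iff] at h hb
    omega

lemma Jcol_odd (j : ℕ) (hj : j < 2*n) (h : ¬ Even j) : Jm n *ᵥ E n j = -E n (j-1) := by
  rw [mulVec_E _ j hj]
  funext k
  rw [J_apply]
  simp only [E, Pi.neg_apply]
  rw [Nat.not_even_iff] at h
  by_cases hk : (k : ℕ) = j - 1
  · rw [if_neg (fun hc => by rw [Nat.even_iff] at hc; omega : ¬((k:ℕ) = j + 1 ∧ Even j)),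
      if_pos ⟨by omega, by rw [Nat.even_iff]; omega⟩, if_pos hk]
  · rw [if_neg (fun hc => by rw [Nat.even_iff] at hc; omega : ¬((k:ℕ) = j + 1 ∧ Even j)),
      if_neg (fun hc => hk (by omega)), if_neg hk]
    norm_num

lemma JT : (Jm n)ᵀ = -(Jm n) := by
  ext k l
  rw [Matrix.transpose_apply, Matrix.neg_apply, J_apply, J_apply]
  by_cases hQ : (l:ℕ) = (k:ℕ) + 1 ∧ Even (k:ℕ)
  · by_cases hP : (k:ℕ) = (l:ℕ) + 1 ∧ Even (l:ℕ)
    · exact absurd hP (fun hc => by omega)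
    · rw [if_pos hQ, if_neg hP, if_pos hQ]; norm_num
  · by_cases hP : (k:ℕ) = (l:ℕ) + 1 ∧ Even (l:ℕ)
    · rw [if_neg hQ, if_pos hP, if_pos hP]
    · rw [if_neg hQ, if_neg hP, if_neg hP, if_neg hQ]; norm_num

lemma JJ : Jm n * Jm n = (-1 : Matrix (Fin (2*n)) (Fin (2*n)) ℝ) := by
  apply ext_col
  intro j
  rw [← Matrix.mulVec_mulVec, Matrix.neg_mulVec, Matrix.one_mulVec]
  by_cases h : Even (j : ℕ)
  · have hj1 : (j : ℕ) + 1 < 2*n := by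
      rcases h with ⟨m, hm⟩; have := j.isLt; omega
    rw [Jcol_even j j.isLt h, Jcol_odd _ hj1 (by simp [Nat.even_add_one, h])]
    simp only [Nat.add_sub_cancel]
  · have hj1 : (j : ℕ) % 2 = 1 := Nat.not_even_iff.mp h
    rw [Jcol_odd j j.isLt h, Matrix.mulVec_neg,
      Jcol_even _ (by omega : (j:ℕ)-1 < 2*n) (by rw [Nat.even_iff]; omega)]
    rw [Nat.sub_add_cancel (by omega)]

end S3
namespace S3
open Matrix
variable {n : ℕ}

lemma J_vmv (a b : G n) : Jm n * vecMulVec a b = vecMulVec (Jm n *ᵥ a) b :=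
  mul_vmv _ a b

lemma vmv_J (a b : G n) : vecMulVec a b * Jm n = -vecMulVec a (Jm n *ᵥ b) := by
  rw [vmv_mul, JT, Matrix.neg_mulVec, vmv_neg_right]

lemma JJv (x : G n) : Jm n *ᵥ (Jm n *ᵥ x) = -x := by
  rw [Matrix.mulVec_mulVec, JJ, Matrix.neg_mulVec, Matrix.one_mulVec]

lemma vecMul_J (x : G n) : x ᵥ* Jm n = -(Jm n *ᵥ x) := by
  have h := Matrix.vecMul_transpose (A := (Jm n)ᵀ) (x := x)
  rw [Matrix.transpose_transpose] at h
  rw [h, JT, Matrix.neg_mulVec]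

lemma dot_J_swap (x y : G n) : x ⬝ᵥ (Jm n *ᵥ y) = -((Jm n *ᵥ x) ⬝ᵥ y) := by
  rw [Matrix.dotProduct_mulVec, vecMul_J, neg_dotProduct]

lemma dot_J_self (x : G n) : x ⬝ᵥ (Jm n *ᵥ x) = 0 := by
  have h := dot_J_swap x x
  rw [dotProduct_comm (Jm n *ᵥ x) x] at h
  linarith

/-- rank-one double commutator (F3) -/
lemma F3 (a b s u : G n) (hJa : Jm n *ᵥ a = b) (hJs : Jm n *ᵥ s = u)
    (haa : a ⬝ᵥ a = 1) (has : a ⬝ᵥ s = 0) (hsa : s ⬝ᵥ a = 0)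
    (hab : a ⬝ᵥ b = 0) (hba : b ⬝ᵥ a = 0)
    (hsu : s ⬝ᵥ u = 0) (hus : u ⬝ᵥ s = 0)
    (hau : a ⬝ᵥ u = -(s ⬝ᵥ b)) (hua : u ⬝ᵥ a = -(s ⬝ᵥ b))
    (hbs : b ⬝ᵥ s = s ⬝ᵥ b) :
    (vecMulVec a s - vecMulVec s a) *
        ((vecMulVec a s - vecMulVec s a) * Jm n - Jm n * (vecMulVec a s - vecMulVec s a))
      - ((vecMulVec a s - vecMulVec s a) * Jm n - Jm n * (vecMulVec a s - vecMulVec s a)) *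
        (vecMulVec a s - vecMulVec s a)
    = (s ⬝ᵥ s) • (vecMulVec a b - vecMulVec b a)
      - (2 * (s ⬝ᵥ b)) • (vecMulVec a s - vecMulVec s a)
      + (vecMulVec s u - vecMulVec u s) := by
  have hKJ : (vecMulVec a s - vecMulVec s a) * Jm n
      = vecMulVec s b - vecMulVec a u := by
    rw [Matrix.sub_mul, vmv_J, vmv_J, hJs, hJa]; abel
  have hJK : Jm n * (vecMulVec a s - vecMulVec s a)
      = vecMulVec b s - vecMulVec u a := by
    rw [Matrix.mul_sub, J_vmv, J_vmv, hJa, hJs]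
  rw [hKJ, hJK]
  simp only [Matrix.mul_sub, Matrix.sub_mul, vmv_vmv, haa, has, hsa, hab, hba, hsu, hus,
    hau, hua, hbs]
  module

end S3
namespace S3
open Matrix
variable {n : ℕ}

lemma vmv_neg_left (a b : G n) : vecMulVec (-a) b = -vecMulVec a b := by
  ext k l; simp [vecMulVec_apply]

/-- comJ of `G(w) = vmv a w - vmv w a` equals `Z(w)` -/
lemma comJ_G (a b w u : G n) (hJa : Jm n *ᵥ a = b) (hJw : Jm n *ᵥ w = u) :
    Jm n * (vecMulVec a w - vecMulVec w a) - (vecMulVec a w - vecMulVec w a) * Jm n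
      = vecMulVec b w - vecMulVec w b + vecMulVec a u - vecMulVec u a := by
  rw [Matrix.mul_sub, Matrix.sub_mul, J_vmv, J_vmv, vmv_J, vmv_J, hJa, hJw]
  abel

/-- comJ of `F(w)` equals `-2 Z(w)` -/
lemma comJ_F (a b w u : G n) (hJa : Jm n *ᵥ a = b) (hJb : Jm n *ᵥ b = -a)
    (hJw : Jm n *ᵥ w = u) (hJu : Jm n *ᵥ u = -w) :
    Jm n * (vecMulVec w a - vecMulVec a w + vecMulVec b u - vecMulVec u b)
      - (vecMulVec w a - vecMulVec a w + vecMulVec b u - vecMulVec u b) * Jm n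
    = (-2 : ℝ) • (vecMulVec b w - vecMulVec w b + vecMulVec a u - vecMulVec u a) := by
  simp only [Matrix.mul_sub, Matrix.sub_mul, Matrix.mul_add, Matrix.add_mul,
    J_vmv, vmv_J, hJa, hJb, hJw, hJu, vmv_neg_left, vmv_neg_right]
  module

/-- comJ of `vmv w u - vmv u w` (u = Jw) vanishes -/
lemma comJ_wu (w u : G n) (hJw : Jm n *ᵥ w = u) (hJu : Jm n *ᵥ u = -w) :
    Jm n * (vecMulVec w u - vecMulVec u w) - (vecMulVec w u - vecMulVec u w) * Jm n
      = 0 := by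
  simp only [Matrix.mul_sub, Matrix.sub_mul, J_vmv, vmv_J, hJw, hJu,
    vmv_neg_left, vmv_neg_right]
  module

/-- `[C, F(w)] = F(Cw)` for `C` skew, commuting with `J`, killing `a`, `b` -/
lemma C_F (a b w u : G n) (C : Matrix (Fin (2*n)) (Fin (2*n)) ℝ)
    (hCT : Cᵀ = -C) (hCa : C *ᵥ a = 0) (hCb : C *ᵥ b = 0)
    (hCu : C *ᵥ u = Jm n *ᵥ (C *ᵥ w)) :
    C * (vecMulVec w a - vecMulVec a w + vecMulVec b u - vecMulVec u b)
      - (vecMulVec w a - vecMulVec a w + vecMulVec b u - vecMulVec u b) * C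
    = vecMulVec (C *ᵥ w) a - vecMulVec a (C *ᵥ w)
        + vecMulVec b (Jm n *ᵥ (C *ᵥ w)) - vecMulVec (Jm n *ᵥ (C *ᵥ w)) b := by
  simp only [Matrix.mul_sub, Matrix.sub_mul, Matrix.mul_add, Matrix.add_mul,
    mul_vmv, vmv_mul, hCT, Matrix.neg_mulVec, vmv_neg_right, vmv_neg_left,
    hCa, hCb, hCu, vmv_zero_left, vmv_zero_right]
  abel

/-- `[B, F(w)]` for `B = vmv w b - vmv b w` -/
lemma B_F (a b w u : G n)
    (hwa : w ⬝ᵥ a = 0) (haw : a ⬝ᵥ w = 0) (hwb : w ⬝ᵥ b = 0) (hbw : b ⬝ᵥ w = 0)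
    (hwu : w ⬝ᵥ u = 0) (huw : u ⬝ᵥ w = 0) (hbb : b ⬝ᵥ b = 1) (hba : b ⬝ᵥ a = 0)
    (hab : a ⬝ᵥ b = 0) (hbu : b ⬝ᵥ u = 0) (hub : u ⬝ᵥ b = 0) :
    (vecMulVec w b - vecMulVec b w)
        * (vecMulVec w a - vecMulVec a w + vecMulVec b u - vecMulVec u b)
      - (vecMulVec w a - vecMulVec a w + vecMulVec b u - vecMulVec u b)
        * (vecMulVec w b - vecMulVec b w)
    = vecMulVec w u - vecMulVec u w
        - (w ⬝ᵥ w) • (vecMulVec b a - vecMulVec a b) := by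
  simp only [Matrix.mul_sub, Matrix.sub_mul, Matrix.mul_add, Matrix.add_mul, vmv_vmv,
    hwa, haw, hwb, hbw, hwu, huw, hbb, hba, hab, hbu, hub]
  module

end S3
namespace S3
open Matrix
variable {n : ℕ}

lemma inn_eq (x y : G n) : inn x y = x ⬝ᵥ y := rfl

lemma E_zero_swap (h0 : 0 < 2*n) (j : Fin (2*n)) : (E n ↑j) ⟨0, h0⟩ = E n 0 j := by
  simp [E, eq_comm]

lemma LE_dot (M : Matrix (Fin (2*n)) (Fin (2*n)) ℝ) (j : Fin (2*n)) (x : G n) :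
    (M *ᵥ E n ↑j) ⬝ᵥ x = (Mᵀ *ᵥ x) j := by
  have h : x ᵥ* M = Mᵀ *ᵥ x := by
    have := Matrix.vecMul_transpose (A := Mᵀ) (x := x)
    rwa [Matrix.transpose_transpose] at this
  rw [dotProduct_comm, Matrix.dotProduct_mulVec, h, dot_E']

lemma LT_dot (M : Matrix (Fin (2*n)) (Fin (2*n)) ℝ) (x y : G n) :
    (Mᵀ *ᵥ x) ⬝ᵥ y = (M *ᵥ y) ⬝ᵥ x := by
  have h : x ᵥ* M = Mᵀ *ᵥ x := by
    have := Matrix.vecMul_transpose (A := Mᵀ) (x := x)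
    rwa [Matrix.transpose_transpose] at this
  rw [← h, ← Matrix.dotProduct_mulVec, dotProduct_comm]

lemma sym_mulVec (M : Matrix (Fin (2*n)) (Fin (2*n)) ℝ) (x : G n) :
    symPart M *ᵥ x = (1/2 : ℝ) • (M *ᵥ x + Mᵀ *ᵥ x) := by
  simp [symPart, Matrix.add_mulVec, Matrix.smul_mulVec]

lemma skew_mulVec (M : Matrix (Fin (2*n)) (Fin (2*n)) ℝ) (x : G n) :
    skewPart M *ᵥ x = (1/2 : ℝ) • (M *ᵥ x - Mᵀ *ᵥ x) := by
  simp [skewPart, Matrix.sub_mulVec, Matrix.smul_mulVec]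

lemma nabla_formula (h0 : 0 < 2*n) (L : Matrix (Fin (2*n)) (Fin (2*n)) ℝ)
    (nabla : G n → G n → G n) (hK : Koszul L nabla) (x y : G n) :
    nabla x y = x ⟨0, h0⟩ • (skewPart L *ᵥ y) - y ⟨0, h0⟩ • (symPart L *ᵥ x)
      + ((symPart L *ᵥ x) ⬝ᵥ y) • E n 0 := by
  funext j
  have h2 := hK x y (E n ↑j)
  simp only [inn_eq, br, sub_dotProduct, smul_dotProduct, smul_eq_mul,
    dot_E 0 h0, dot_E', LE_dot, E_zero_swap h0] at h2
  simp only [Pi.add_apply, Pi.sub_apply, Pi.smul_apply, smul_eq_mul,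
    sym_mulVec, skew_mulVec, LT_dot, add_dotProduct, smul_dotProduct]
  linear_combination h2 / 2

end S3
namespace S3
open Matrix
variable {n : ℕ}

def Zm (n : ℕ) (w : G n) : Matrix (Fin (2*n)) (Fin (2*n)) ℝ :=
  vecMulVec (E n 1) w - vecMulVec w (E n 1)
    + vecMulVec (E n 0) (Jm n *ᵥ w) - vecMulVec (Jm n *ᵥ w) (E n 0)

lemma Zm_add (w w' : G n) : Zm n (w + w') = Zm n w + Zm n w' := by
  simp only [Zm, Matrix.mulVec_add, vmv_add_right, vmv_add_left]
  abel

lemma vmv_sub_right (a b c : G n) :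
    vecMulVec a (b - c) = vecMulVec a b - vecMulVec a c := by
  ext k l; simp [vecMulVec_apply]; ring

lemma vmv_sub_left (a b c : G n) :
    vecMulVec (a - b) c = vecMulVec a c - vecMulVec b c := by
  ext k l; simp [vecMulVec_apply]; ring

lemma Zm_sub (w w' : G n) : Zm n (w - w') = Zm n w - Zm n w' := by
  simp only [Zm, Matrix.mulVec_sub, vmv_sub_right, vmv_sub_left]
  abel

lemma Zm_smul (r : ℝ) (w : G n) : Zm n (r • w) = r • Zm n w := by
  simp only [Zm, Matrix.mulVec_smul, vmv_smul_right, vmv_smul_left, smul_sub, smul_add]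

lemma vmv_transpose (a b : G n) : (vecMulVec a b)ᵀ = vecMulVec b a := by
  ext k l; simp [vecMulVec_apply, mul_comm]

lemma symPart_transpose (M : Matrix (Fin (2*n)) (Fin (2*n)) ℝ) :
    (symPart M)ᵀ = symPart M := by
  simp [symPart, Matrix.transpose_add, Matrix.transpose_smul, add_comm]

lemma skewPart_transpose (M : Matrix (Fin (2*n)) (Fin (2*n)) ℝ) :
    (skewPart M)ᵀ = -skewPart M := by
  simp only [skewPart, Matrix.transpose_smul, Matrix.transpose_sub,
    Matrix.transpose_transpose, ← smul_neg, neg_sub]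

lemma sym_add_skew (M : Matrix (Fin (2*n)) (Fin (2*n)) ℝ) :
    symPart M + skewPart M = M := by
  simp only [symPart, skewPart]; module

lemma sum_mulVec (f : Fin (2*n) → Matrix (Fin (2*n)) (Fin (2*n)) ℝ) (x : G n) :
    (∑ i, f i) *ᵥ x = ∑ i, f i *ᵥ x := by
  funext k
  simp only [Finset.sum_apply, mulVec, dotProduct, Matrix.sum_apply, Finset.sum_mul]
  exact Finset.sum_comm

lemma vmv_sum_right (a : G n) (f : Fin (2*n) → G n) :
    vecMulVec a (∑ i, f i) = ∑ i, vecMulVec a (f i) := by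
  ext k l
  simp [vecMulVec_apply, Matrix.sum_apply, Finset.mul_sum]

lemma vmv_sum_left (a : G n) (f : Fin (2*n) → G n) :
    vecMulVec (∑ i, f i) a = ∑ i, vecMulVec (f i) a := by
  ext k l
  simp [vecMulVec_apply, Matrix.sum_apply, Finset.sum_mul]

lemma comJ_add (X Y : Matrix (Fin (2*n)) (Fin (2*n)) ℝ) :
    Jm n * (X + Y) - (X + Y) * Jm n
      = (Jm n * X - X * Jm n) + (Jm n * Y - Y * Jm n) := by noncomm_ring

lemma comJ_sub (X Y : Matrix (Fin (2*n)) (Fin (2*n)) ℝ) :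
    Jm n * (X - Y) - (X - Y) * Jm n
      = (Jm n * X - X * Jm n) - (Jm n * Y - Y * Jm n) := by noncomm_ring

lemma comJ_smul (r : ℝ) (X : Matrix (Fin (2*n)) (Fin (2*n)) ℝ) :
    Jm n * (r • X) - (r • X) * Jm n = r • (Jm n * X - X * Jm n) := by
  simp [Matrix.mul_smul, Matrix.smul_mul, smul_sub]

lemma comJ_SS (S : Matrix (Fin (2*n)) (Fin (2*n)) ℝ) :
    Jm n * (S * S * Jm n + Jm n * (S * S)) - (S * S * Jm n + Jm n * (S * S)) * Jm n
      = 0 := by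
  have h : Jm n * (S * S * Jm n + Jm n * (S * S)) - (S * S * Jm n + Jm n * (S * S)) * Jm n
      = Jm n * Jm n * (S * S) - (S * S) * (Jm n * Jm n) := by noncomm_ring
  rw [h, JJ]
  simp

end S3
open S3 in
/-- Corollary 3.5: if `J` is integrable (`w₀ = 0` and `D J' = J' D`),
then `J` is harmonic iff `D v₀ = (Tr D) v₀`. -/
theorem statement3 (n : ℕ) (hn : 2 ≤ n) (μ : ℝ) (v₀ w₀ : G n) (hv : inA v₀) (hw : inA w₀)
    (D : Matrix (Fin (2*n)) (Fin (2*n)) ℝ) (hD : DinA D)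
    (hw0 : w₀ = 0)
    (hint : (∀ x : G n, inA x → (D).mulVec ((Jm n).mulVec x) = (Jm n).mulVec ((D).mulVec x)))
    (nabla : G n → G n → G n) (hK : Koszul (Lm μ v₀ w₀ D) nabla) :
    Harmonic nabla ↔ D.mulVec v₀ = Matrix.trace D • v₀ := by
  subst hw0
  have h0 : 0 < 2*n := by omega
  have h1 : 1 < 2*n := by omega
  set L : Matrix (Fin (2*n)) (Fin (2*n)) ℝ := Lm μ v₀ 0 D with hLdef
  set S := symPart L with hSdef
  set A := skewPart L with hAdef
  set Ds := symPart D with hDsdef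
  set Da := skewPart D with hDadef
  -- basic dot facts
  have hE00 : E n 0 ⬝ᵥ E n 0 = 1 := by rw [E_dot 0 h0]; simp [E]
  have hE01 : E n 0 ⬝ᵥ E n 1 = 0 := by rw [E_dot 0 h0]; simp [E]
  have hE10 : E n 1 ⬝ᵥ E n 0 = 0 := by rw [E_dot 1 h1]; simp [E]
  have hE11 : E n 1 ⬝ᵥ E n 1 = 1 := by rw [E_dot 1 h1]; simp [E]
  have hE00v : (E n 0) ⟨0, h0⟩ = 1 := by simp [E]
  have hJ0 : Jm n *ᵥ E n 0 = E n 1 := by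
    have := Jcol_even 0 h0 Even.zero
    norm_num at this
    exact this
  have hJ1 : Jm n *ᵥ E n 1 = -E n 0 := by
    have := Jcol_odd 1 h1 (by simp)
    norm_num at this
    exact this
  have hv0d : v₀ ⬝ᵥ E n 0 = 0 := by rw [dot_E 0 h0]; exact hv _ (by norm_num)
  have hv0d' : E n 0 ⬝ᵥ v₀ = 0 := by rw [E_dot 0 h0]; exact hv _ (by norm_num)
  have hv1d : v₀ ⬝ᵥ E n 1 = 0 := by rw [dot_E 1 h1]; exact hv _ (by norm_num)
  have hv1d' : E n 1 ⬝ᵥ v₀ = 0 := by rw [E_dot 1 h1]; exact hv _ (by norm_num)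
  -- D facts
  have hDc0 : D *ᵥ E n 0 = 0 := by
    rw [mulVec_E D 0 h0]; funext k; exact hD k ⟨0,h0⟩ (Or.inr (by norm_num))
  have hDc1 : D *ᵥ E n 1 = 0 := by
    rw [mulVec_E D 1 h1]; funext k; exact hD k ⟨1,h1⟩ (Or.inr (by norm_num))
  have hDTc0 : Dᵀ *ᵥ E n 0 = 0 := by
    rw [mulVec_E Dᵀ 0 h0]; funext k; exact hD ⟨0,h0⟩ k (Or.inl (by norm_num))
  have hDTc1 : Dᵀ *ᵥ E n 1 = 0 := by
    rw [mulVec_E Dᵀ 1 h1]; funext k; exact hD ⟨1,h1⟩ k (Or.inl (by norm_num))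
  have hDsc0 : Ds *ᵥ E n 0 = 0 := by rw [hDsdef, sym_mulVec, hDc0, hDTc0]; simp
  have hDsc1 : Ds *ᵥ E n 1 = 0 := by rw [hDsdef, sym_mulVec, hDc1, hDTc1]; simp
  have hDac0 : Da *ᵥ E n 0 = 0 := by rw [hDadef, skew_mulVec, hDc0, hDTc0]; simp
  have hDac1 : Da *ᵥ E n 1 = 0 := by rw [hDadef, skew_mulVec, hDc1, hDTc1]; simp
  have hDrow : ∀ (x : G n) (i : Fin (2*n)), (i:ℕ) < 2 → (D *ᵥ x) i = 0 := by
    intro x i hi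
    simp only [Matrix.mulVec, dotProduct]
    apply Finset.sum_eq_zero
    intro l _
    rw [hD i l (Or.inl hi), zero_mul]
  have hJD : D * Jm n = Jm n * D := by
    apply S3.ext_col
    intro j
    rw [← Matrix.mulVec_mulVec, ← Matrix.mulVec_mulVec]
    rcases lt_or_ge (j:ℕ) 2 with hj | hj
    · have hj01 : (j:ℕ) = 0 ∨ (j:ℕ) = 1 := by omega
      rcases hj01 with hje | hje
      · rw [show E n ↑j = E n 0 from by rw [hje], hJ0, hDc1, hDc0, Matrix.mulVec_zero]
      · rw [show E n ↑j = E n 1 from by rw [hje], hJ1, Matrix.mulVec_neg, hDc0, hDc1,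
          Matrix.mulVec_zero, neg_zero]
    · exact hint (E n ↑j) (fun i hi => by
        simp only [E]; rw [if_neg]; omega)
  have hJDT : Dᵀ * Jm n = Jm n * Dᵀ := by
    have h := congrArg Matrix.transpose hJD
    rw [Matrix.transpose_mul, Matrix.transpose_mul, JT, Matrix.neg_mul, Matrix.mul_neg] at h
    exact (neg_inj.mp h).symm
  have hDaJ : Da * Jm n = Jm n * Da := by
    rw [hDadef]
    simp only [skewPart, Matrix.smul_mul, Matrix.mul_smul, Matrix.sub_mul, Matrix.mul_sub,
      hJD, hJDT]
  have hDsJ : Ds * Jm n = Jm n * Ds := by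
    rw [hDsdef]
    simp only [symPart, Matrix.smul_mul, Matrix.mul_smul, Matrix.add_mul, Matrix.mul_add,
      hJD, hJDT]
  have hDaT : Daᵀ = -Da := by rw [hDadef]; exact skewPart_transpose D
  have hDav : Da *ᵥ (Jm n *ᵥ v₀) = Jm n *ᵥ (Da *ᵥ v₀) := by
    rw [Matrix.mulVec_mulVec, Matrix.mulVec_mulVec, hDaJ]
  -- L decomposition
  have hLdec : L = μ • vecMulVec (E n 1) (E n 1) + vecMulVec v₀ (E n 1) + D := by
    rw [hLdef]
    ext k l
    simp only [Lm, Matrix.of_apply, Matrix.add_apply, Matrix.smul_apply, vecMulVec_apply,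
      E, smul_eq_mul, Pi.zero_apply, ite_self, add_zero]
    split_ifs <;> first | ring1 | (exfalso; omega)
  have hLT : Lᵀ = μ • vecMulVec (E n 1) (E n 1) + vecMulVec (E n 1) v₀ + Dᵀ := by
    rw [hLdec]
    simp [Matrix.transpose_add, Matrix.transpose_smul, vmv_transpose]
  have hSdec : S = μ • vecMulVec (E n 1) (E n 1)
      + (1/2:ℝ) • (vecMulVec v₀ (E n 1) + vecMulVec (E n 1) v₀) + Ds := by
    rw [hSdef, hDsdef]
    simp only [symPart]
    rw [hLT, hLdec]
    module
  have hAdec : A = (1/2:ℝ) • (vecMulVec v₀ (E n 1) - vecMulVec (E n 1) v₀) + Da := by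
    rw [hAdef, hDadef]
    simp only [skewPart]
    rw [hLT, hLdec]
    module
  -- S facts
  have hSe0 : S *ᵥ E n 0 = 0 := by
    rw [hSdec]
    simp only [Matrix.add_mulVec, Matrix.smul_mulVec, vmv_mulVec, hE10, hv0d, hDsc0,
      zero_smul, smul_zero, add_zero, zero_add]
  have hAe0 : A *ᵥ E n 0 = 0 := by
    rw [hAdec]
    simp only [Matrix.add_mulVec, Matrix.sub_mulVec, Matrix.smul_mulVec, vmv_mulVec,
      hE10, hv0d, hDac0, zero_smul, smul_zero, add_zero, zero_add, sub_zero]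
  have hST : Sᵀ = S := by rw [hSdef]; exact symPart_transpose L
  have hrow0 : ∀ x : G n, E n 0 ⬝ᵥ (S *ᵥ x) = 0 := by
    intro x
    have hv' : E n 0 ᵥ* S = 0 := by
      have h := Matrix.vecMul_transpose (A := Sᵀ) (x := E n 0)
      rw [Matrix.transpose_transpose] at h
      rw [h, hST, hSe0]
    rw [Matrix.dotProduct_mulVec, hv', zero_dotProduct]
  have hrow0' : ∀ x : G n, (S *ᵥ x) ⬝ᵥ E n 0 = 0 := fun x => by
    rw [dotProduct_comm]; exact hrow0 x
  have hSe1 : S *ᵥ E n 1 = μ • E n 1 + (1/2:ℝ) • v₀ := by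
    rw [hSdec]
    simp only [Matrix.add_mulVec, Matrix.smul_mulVec, vmv_mulVec, hE11, hv1d, hDsc1,
      zero_smul, smul_zero, add_zero, one_smul, smul_add]
  have hSv0 : S *ᵥ v₀ = ((v₀ ⬝ᵥ v₀)/2) • E n 1 + Ds *ᵥ v₀ := by
    rw [hSdec]
    simp only [Matrix.add_mulVec, Matrix.smul_mulVec, vmv_mulVec, hE10, hv1d', hv0d,
      zero_smul, smul_zero, add_zero, zero_add, smul_add, smul_smul]
    module
  have hq : S *ᵥ (S *ᵥ E n 1) = (μ*μ + (v₀⬝ᵥv₀)/4) • E n 1 + (μ/2) • v₀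
      + (1/2:ℝ) • (Ds *ᵥ v₀) := by
    rw [hSe1, Matrix.mulVec_add, Matrix.mulVec_smul, Matrix.mulVec_smul, hSe1, hSv0]
    module
  -- nabla formula
  have hnab : ∀ x y : G n, nabla x y = x ⟨0,h0⟩ • (A *ᵥ y) - y ⟨0,h0⟩ • (S *ᵥ x)
      + ((S *ᵥ x) ⬝ᵥ y) • E n 0 := by
    intro x y
    rw [nabla_formula h0 L nabla hK x y, ← hSdef, ← hAdef]
  set P : G n → Matrix (Fin (2*n)) (Fin (2*n)) ℝ :=
    fun y => y ⟨0,h0⟩ • A + vecMulVec (E n 0) (S *ᵥ y) - vecMulVec (S *ᵥ y) (E n 0)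
    with hPdef
  set Qm : G n → Matrix (Fin (2*n)) (Fin (2*n)) ℝ := fun y => P y * Jm n - Jm n * P y
    with hQdef
  have hPmul : ∀ y x : G n, nabla y x = P y *ᵥ x := by
    intro y x
    rw [hnab y x]
    simp only [hPdef, Matrix.sub_mulVec, Matrix.add_mulVec, Matrix.smul_mulVec,
      vmv_mulVec, E_dot 0 h0]
    module
  have hPE0 : P (E n 0) = A := by
    simp only [hPdef, hE00v, hSe0, vmv_zero_right, vmv_zero_left, one_smul, add_zero,
      sub_zero]
  have hQ0 : Qm (E n 0) = A * Jm n - Jm n * A := by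
    simp only [hQdef, hPE0]
  have hcovJ : ∀ y x : G n, covJ nabla y x = Qm y *ᵥ x := by
    intro y x
    rw [covJ, hPmul, hPmul]
    simp only [hQdef, Matrix.sub_mulVec, Matrix.mulVec_mulVec]
  have hQlin : ∀ c : ℝ, Qm (c • E n 0) = c • Qm (E n 0) := by
    intro c
    have hPc : P (c • E n 0) = c • A := by
      simp only [hPdef, Pi.smul_apply, hE00v, Matrix.mulVec_smul, hSe0, smul_zero,
        vmv_zero_right, vmv_zero_left, smul_eq_mul, mul_one, add_zero, sub_zero]
    simp only [hQdef, hPc, hPE0, Matrix.smul_mul, Matrix.mul_smul, smul_sub]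
  have hnabii : ∀ i : Fin (2*n), nabla (E n ↑i) (E n ↑i)
      = ((S *ᵥ E n ↑i) ⬝ᵥ E n ↑i) • E n 0 := by
    intro i
    rw [hnab]
    by_cases hi : (i:ℕ) = 0
    · have hEi : E n ↑i = E n 0 := by rw [hi]
      rw [hEi, hAe0, hSe0]
      simp
    · have hEi0 : (E n ↑i) ⟨0,h0⟩ = 0 := by
        simp only [E]
        rw [if_neg (fun hc => hi hc.symm)]
      rw [hEi0]
      simp
  set MM : Matrix (Fin (2*n)) (Fin (2*n)) ℝ :=
    (∑ i : Fin (2*n), (P (E n ↑i) * Qm (E n ↑i) - Qm (E n ↑i) * P (E n ↑i)))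
      - (∑ i : Fin (2*n), ((S *ᵥ E n ↑i) ⬝ᵥ E n ↑i)) • Qm (E n 0) with hMMdef
  have hrough : ∀ x : G n, roughLap nabla x = MM *ᵥ x := by
    intro x
    rw [roughLap]
    have hterm : ∀ i : Fin (2*n),
        nabla (E n ↑i) (covJ nabla (E n ↑i) x) - covJ nabla (E n ↑i) (nabla (E n ↑i) x)
          - covJ nabla (nabla (E n ↑i) (E n ↑i)) x
        = (P (E n ↑i) * Qm (E n ↑i) - Qm (E n ↑i) * P (E n ↑i)) *ᵥ x
          - ((S *ᵥ E n ↑i) ⬝ᵥ E n ↑i) • (Qm (E n 0) *ᵥ x) := by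
      intro i
      rw [hcovJ (E n ↑i) x, hPmul (E n ↑i) (Qm (E n ↑i) *ᵥ x),
        hPmul (E n ↑i) x, hcovJ (E n ↑i) (P (E n ↑i) *ᵥ x), hnabii i,
        hcovJ _ x, hQlin]
      rw [Matrix.mulVec_mulVec, Matrix.mulVec_mulVec, Matrix.sub_mulVec,
        Matrix.smul_mulVec]
    rw [Finset.sum_congr rfl (fun i _ => hterm i), Finset.sum_sub_distrib,
      ← Finset.sum_smul, hMMdef]
    simp only [Matrix.sub_mulVec, S3.sum_mulVec, Matrix.smul_mulVec]
  have hHarm : Harmonic nabla ↔ Jm n * MM = MM * Jm n := by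
    constructor
    · intro h
      apply S3.ext_col
      intro j
      have hx := h (E n ↑j)
      rw [hrough, hrough] at hx
      rw [← Matrix.mulVec_mulVec, ← Matrix.mulVec_mulVec]
      exact hx
    · intro h x
      rw [hrough, hrough, Matrix.mulVec_mulVec, Matrix.mulVec_mulVec, h]
  -- closed form of MM
  have hterm2 : ∀ i : Fin (2*n),
      P (E n ↑i) * Qm (E n ↑i) - Qm (E n ↑i) * P (E n ↑i)
      = (if (i:ℕ) = 0 then
          (A * (A * Jm n - Jm n * A) - (A * Jm n - Jm n * A) * A) else 0)
        + (((S *ᵥ E n ↑i) ⬝ᵥ (S *ᵥ E n ↑i)) •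
              (vecMulVec (E n 0) (E n 1) - vecMulVec (E n 1) (E n 0))
            - (2 * ((S *ᵥ E n ↑i) ⬝ᵥ E n 1)) •
              (vecMulVec (E n 0) (S *ᵥ E n ↑i) - vecMulVec (S *ᵥ E n ↑i) (E n 0))
            + (vecMulVec (S *ᵥ E n ↑i) (Jm n *ᵥ (S *ᵥ E n ↑i))
                - vecMulVec (Jm n *ᵥ (S *ᵥ E n ↑i)) (S *ᵥ E n ↑i))) := by
    intro i
    by_cases hi : (i:ℕ) = 0
    · rw [if_pos hi]
      have hEi : E n ↑i = E n 0 := by rw [hi]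
      rw [hEi, hQ0, hPE0, hSe0]
      simp [vmv_zero_left, vmv_zero_right]
    · rw [if_neg hi, zero_add]
      have hEi0 : (E n ↑i) ⟨0,h0⟩ = 0 := by
        simp only [E]
        rw [if_neg (fun hc => hi hc.symm)]
      have hPi : P (E n ↑i)
          = vecMulVec (E n 0) (S *ᵥ E n ↑i) - vecMulVec (S *ᵥ E n ↑i) (E n 0) := by
        simp only [hPdef, hEi0, zero_smul, zero_add]
      have hQi : Qm (E n ↑i)
          = (vecMulVec (E n 0) (S *ᵥ E n ↑i) - vecMulVec (S *ᵥ E n ↑i) (E n 0)) * Jm n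
            - Jm n * (vecMulVec (E n 0) (S *ᵥ E n ↑i)
                - vecMulVec (S *ᵥ E n ↑i) (E n 0)) := by
        simp only [hQdef, hPi]
      rw [hPi, hQi]
      exact F3 (E n 0) (E n 1) (S *ᵥ E n ↑i) (Jm n *ᵥ (S *ᵥ E n ↑i)) hJ0 rfl
        hE00 (hrow0 _) (hrow0' _) hE01 hE10 (dot_J_self _)
        (by rw [dotProduct_comm]; exact dot_J_self _)
        (by rw [dot_J_swap, hJ0, dotProduct_comm])
        (by rw [dotProduct_comm, dot_J_swap, hJ0, dotProduct_comm])
        (dotProduct_comm _ _)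
  have hite : ∀ C : Matrix (Fin (2*n)) (Fin (2*n)) ℝ,
      ∑ i : Fin (2*n), (if (i:ℕ) = 0 then C else 0) = C := by
    intro C
    rw [Finset.sum_eq_single (⟨0,h0⟩ : Fin (2*n))]
    · simp
    · intro b _ hb; rw [if_neg (fun hc => hb (Fin.ext hc))]
    · intro hmem; exact absurd (Finset.mem_univ _) hmem
  have hY : ∑ i : Fin (2*n), (2 * ((S *ᵥ E n ↑i) ⬝ᵥ E n 1)) •
        (vecMulVec (E n 0) (S *ᵥ E n ↑i) - vecMulVec (S *ᵥ E n ↑i) (E n 0))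
      = (2:ℝ) • (vecMulVec (E n 0) (S *ᵥ (S *ᵥ E n 1))
          - vecMulVec (S *ᵥ (S *ᵥ E n 1)) (E n 0)) := by
    have h1 : ∀ i : Fin (2*n), (2 * ((S *ᵥ E n ↑i) ⬝ᵥ E n 1)) •
          (vecMulVec (E n 0) (S *ᵥ E n ↑i) - vecMulVec (S *ᵥ E n ↑i) (E n 0))
        = (2:ℝ) • (vecMulVec (E n 0) (((S *ᵥ E n 1) i) • (S *ᵥ E n ↑i))
            - vecMulVec (((S *ᵥ E n 1) i) • (S *ᵥ E n ↑i)) (E n 0)) := by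
      intro i
      rw [show (S *ᵥ E n ↑i) ⬝ᵥ E n 1 = (S *ᵥ E n 1) i from by rw [LE_dot, hST],
        vmv_smul_right, vmv_smul_left, ← smul_sub, smul_smul]
    rw [Finset.sum_congr rfl (fun i _ => h1 i), ← Finset.smul_sum,
      Finset.sum_sub_distrib, ← vmv_sum_right, ← vmv_sum_left,
      sum_smul_mulVec S (S *ᵥ E n 1)]
  have hZ3 : ∑ i : Fin (2*n), (vecMulVec (S *ᵥ E n ↑i) (Jm n *ᵥ (S *ᵥ E n ↑i))
        - vecMulVec (Jm n *ᵥ (S *ᵥ E n ↑i)) (S *ᵥ E n ↑i))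
      = -(S * S * Jm n + Jm n * (S * S)) := by
    rw [Finset.sum_sub_distrib]
    have e1 : ∑ i : Fin (2*n), vecMulVec (S *ᵥ E n ↑i) (Jm n *ᵥ (S *ᵥ E n ↑i))
        = S * (Jm n * S)ᵀ := by
      rw [Finset.sum_congr rfl (fun i _ => by rw [Matrix.mulVec_mulVec])]
      exact sum_vmv S (Jm n * S)
    have e2 : ∑ i : Fin (2*n), vecMulVec (Jm n *ᵥ (S *ᵥ E n ↑i)) (S *ᵥ E n ↑i)
        = (Jm n * S) * Sᵀ := by
      rw [Finset.sum_congr rfl (fun i _ => by rw [Matrix.mulVec_mulVec])]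
      exact sum_vmv (Jm n * S) S
    rw [e1, e2, Matrix.transpose_mul, hST, JT]
    noncomm_ring
  have hsum : MM = (A * (A * Jm n - Jm n * A) - (A * Jm n - Jm n * A) * A)
      + (∑ i : Fin (2*n), (S *ᵥ E n ↑i) ⬝ᵥ (S *ᵥ E n ↑i)) •
          (vecMulVec (E n 0) (E n 1) - vecMulVec (E n 1) (E n 0))
      - (2:ℝ) • (vecMulVec (E n 0) (S *ᵥ (S *ᵥ E n 1))
          - vecMulVec (S *ᵥ (S *ᵥ E n 1)) (E n 0))
      - (S * S * Jm n + Jm n * (S * S))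
      - (∑ i : Fin (2*n), (S *ᵥ E n ↑i) ⬝ᵥ E n ↑i) • (A * Jm n - Jm n * A) := by
    rw [hMMdef, hQ0]
    rw [Finset.sum_congr rfl (fun i _ => hterm2 i), Finset.sum_add_distrib, hite,
      Finset.sum_add_distrib, Finset.sum_sub_distrib, ← Finset.sum_smul, hY, hZ3]
    abel
  -- commutator with J
  have hZb : ∀ w : G n, vecMulVec (E n 1) w - vecMulVec w (E n 1)
      + vecMulVec (E n 0) (Jm n *ᵥ w) - vecMulVec (Jm n *ᵥ w) (E n 0) = Zm n w :=
    fun w => rfl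
  have hAJ : A * Jm n - Jm n * A
      = (1/2:ℝ) • (vecMulVec v₀ (E n 0) - vecMulVec (E n 0) v₀
          + vecMulVec (E n 1) (Jm n *ᵥ v₀) - vecMulVec (Jm n *ᵥ v₀) (E n 1)) := by
    have hBJ : (vecMulVec v₀ (E n 1) - vecMulVec (E n 1) v₀) * Jm n
        - Jm n * (vecMulVec v₀ (E n 1) - vecMulVec (E n 1) v₀)
        = vecMulVec v₀ (E n 0) - vecMulVec (E n 0) v₀
          + vecMulVec (E n 1) (Jm n *ᵥ v₀) - vecMulVec (Jm n *ᵥ v₀) (E n 1) := by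
      rw [Matrix.sub_mul, Matrix.mul_sub, vmv_J, vmv_J, J_vmv, J_vmv, hJ1]
      simp only [vmv_neg_right, vmv_neg_left, neg_neg]
      abel
    rw [← hBJ, hAdec]
    simp only [Matrix.add_mul, Matrix.mul_add, Matrix.smul_mul, Matrix.mul_smul, hDaJ]
    module
  have hCF := C_F (E n 0) (E n 1) v₀ (Jm n *ᵥ v₀) Da hDaT hDac0 hDac1 hDav
  have hbu : E n 1 ⬝ᵥ (Jm n *ᵥ v₀) = 0 := by
    rw [dot_J_swap, hJ1, neg_dotProduct, neg_neg, hv0d']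
  have hBF := B_F (E n 0) (E n 1) v₀ (Jm n *ᵥ v₀) hv0d hv0d' hv1d hv1d'
    (dot_J_self v₀) (by rw [dotProduct_comm]; exact dot_J_self v₀) hE11 hE10 hE01
    hbu (by rw [dotProduct_comm]; exact hbu)
  have hAFsplit : A * (vecMulVec v₀ (E n 0) - vecMulVec (E n 0) v₀
        + vecMulVec (E n 1) (Jm n *ᵥ v₀) - vecMulVec (Jm n *ᵥ v₀) (E n 1))
      - (vecMulVec v₀ (E n 0) - vecMulVec (E n 0) v₀
        + vecMulVec (E n 1) (Jm n *ᵥ v₀) - vecMulVec (Jm n *ᵥ v₀) (E n 1)) * A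
      = (1/2:ℝ) • ((vecMulVec v₀ (E n 1) - vecMulVec (E n 1) v₀)
            * (vecMulVec v₀ (E n 0) - vecMulVec (E n 0) v₀
              + vecMulVec (E n 1) (Jm n *ᵥ v₀) - vecMulVec (Jm n *ᵥ v₀) (E n 1))
          - (vecMulVec v₀ (E n 0) - vecMulVec (E n 0) v₀
              + vecMulVec (E n 1) (Jm n *ᵥ v₀) - vecMulVec (Jm n *ᵥ v₀) (E n 1))
            * (vecMulVec v₀ (E n 1) - vecMulVec (E n 1) v₀))
        + (Da * (vecMulVec v₀ (E n 0) - vecMulVec (E n 0) v₀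
              + vecMulVec (E n 1) (Jm n *ᵥ v₀) - vecMulVec (Jm n *ᵥ v₀) (E n 1))
          - (vecMulVec v₀ (E n 0) - vecMulVec (E n 0) v₀
              + vecMulVec (E n 1) (Jm n *ᵥ v₀) - vecMulVec (Jm n *ᵥ v₀) (E n 1)) * Da) := by
    rw [hAdec]
    simp only [Matrix.add_mul, Matrix.mul_add, Matrix.smul_mul, Matrix.mul_smul]
    module
  have hCA : A * (A * Jm n - Jm n * A) - (A * Jm n - Jm n * A) * A
      = (1/2:ℝ) • ((1/2:ℝ) • (vecMulVec v₀ (Jm n *ᵥ v₀) - vecMulVec (Jm n *ᵥ v₀) v₀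
            - (v₀ ⬝ᵥ v₀) • (vecMulVec (E n 1) (E n 0) - vecMulVec (E n 0) (E n 1)))
          + (vecMulVec (Da *ᵥ v₀) (E n 0) - vecMulVec (E n 0) (Da *ᵥ v₀)
            + vecMulVec (E n 1) (Jm n *ᵥ (Da *ᵥ v₀))
            - vecMulVec (Jm n *ᵥ (Da *ᵥ v₀)) (E n 1))) := by
    rw [hAJ, Matrix.mul_smul, Matrix.smul_mul, ← smul_sub, hAFsplit, hBF, hCF]
  have hW0' : Jm n * (vecMulVec (E n 1) (E n 0) - vecMulVec (E n 0) (E n 1))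
      - (vecMulVec (E n 1) (E n 0) - vecMulVec (E n 0) (E n 1)) * Jm n = 0 := by
    rw [comJ_G (E n 1) (-(E n 0)) (E n 0) (E n 1) hJ1 hJ0, vmv_neg_right, vmv_neg_left]
    abel
  have hW0 : Jm n * (vecMulVec (E n 0) (E n 1) - vecMulVec (E n 1) (E n 0))
      - (vecMulVec (E n 0) (E n 1) - vecMulVec (E n 1) (E n 0)) * Jm n = 0 := by
    rw [comJ_G (E n 0) (E n 1) (E n 1) (-(E n 0)) hJ0 hJ1, vmv_neg_right, vmv_neg_left]
    abel
  have hcomCA : Jm n * (A * (A * Jm n - Jm n * A) - (A * Jm n - Jm n * A) * A)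
      - (A * (A * Jm n - Jm n * A) - (A * Jm n - Jm n * A) * A) * Jm n
      = -Zm n (Da *ᵥ v₀) := by
    rw [hCA, comJ_smul, comJ_add, comJ_smul, comJ_sub, comJ_smul,
      comJ_wu v₀ (Jm n *ᵥ v₀) rfl (JJv v₀), hW0',
      comJ_F (E n 0) (E n 1) (Da *ᵥ v₀) (Jm n *ᵥ (Da *ᵥ v₀)) hJ0 hJ1 rfl (JJv _), hZb]
    rw [smul_zero, zero_sub, smul_neg, smul_zero, neg_zero, zero_add, smul_smul]
    rw [show (1/2:ℝ) * (-2) = -1 by norm_num, neg_one_smul]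
  -- hAJcom
  have hAJcom : Jm n * (A * Jm n - Jm n * A) - (A * Jm n - Jm n * A) * Jm n
      = -Zm n v₀ := by
    rw [hAJ, comJ_smul,
      comJ_F (E n 0) (E n 1) v₀ (Jm n *ᵥ v₀) hJ0 hJ1 rfl (JJv v₀), hZb, smul_smul,
      show (1/2:ℝ) * (-2) = -1 by norm_num, neg_one_smul]
  have hZe1 : Zm n (E n 1) = 0 := by
    simp only [Zm, hJ1, vmv_neg_right, vmv_neg_left]
    abel
  have hZq : Zm n (S *ᵥ (S *ᵥ E n 1))
      = (μ/2) • Zm n v₀ + (1/2:ℝ) • Zm n (Ds *ᵥ v₀) := by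
    rw [hq, Zm_add, Zm_add, Zm_smul, Zm_smul, Zm_smul, hZe1, smul_zero, zero_add]
  have hGqZ : Jm n * (vecMulVec (E n 0) (S *ᵥ (S *ᵥ E n 1))
        - vecMulVec (S *ᵥ (S *ᵥ E n 1)) (E n 0))
      - (vecMulVec (E n 0) (S *ᵥ (S *ᵥ E n 1))
        - vecMulVec (S *ᵥ (S *ᵥ E n 1)) (E n 0)) * Jm n
      = Zm n (S *ᵥ (S *ᵥ E n 1)) :=
    (comJ_G (E n 0) (E n 1) (S *ᵥ (S *ᵥ E n 1)) (Jm n *ᵥ (S *ᵥ (S *ᵥ E n 1)))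
      hJ0 rfl).trans (hZb _)
  have hτ : (∑ i : Fin (2*n), (S *ᵥ E n ↑i) ⬝ᵥ E n ↑i) = μ + Matrix.trace D := by
    have h2 : ∀ i : Fin (2*n), (S *ᵥ E n ↑i) ⬝ᵥ E n ↑i = S i i := by
      intro i; rw [dot_E', mulVec_E']
    rw [Finset.sum_congr rfl (fun i _ => h2 i)]
    have h3 : ∑ i : Fin (2*n), S i i = Matrix.trace S := rfl
    have hDstr : Matrix.trace Ds = Matrix.trace D := by
      rw [hDsdef]
      simp only [symPart, Matrix.trace_smul, Matrix.trace_add, Matrix.trace_transpose,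
        smul_eq_mul]
      ring
    rw [h3, hSdec, Matrix.trace_add, Matrix.trace_add, Matrix.trace_smul,
      Matrix.trace_smul, Matrix.trace_add, trace_vmv, trace_vmv, trace_vmv, hE11,
      hv1d, hv1d', hDstr]
    simp
  have hDv : D *ᵥ v₀ = Da *ᵥ v₀ + Ds *ᵥ v₀ := by
    rw [hDadef, hDsdef, ← Matrix.add_mulVec, add_comm (skewPart D) (symPart D),
      sym_add_skew D]
  have hcomMM : Jm n * MM - MM * Jm n = Zm n (Matrix.trace D • v₀ - D *ᵥ v₀) := by
    rw [hsum]
    rw [comJ_sub, comJ_sub, comJ_sub, comJ_add]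
    rw [comJ_smul, comJ_smul, comJ_smul]
    rw [hcomCA, hW0, hGqZ, comJ_SS S, hAJcom, hZq, hτ, hDv]
    rw [Zm_sub, Zm_add, Zm_smul]
    rw [smul_zero]
    module
  rw [hHarm]
  have hZcol : ∀ c : G n, c ⟨0,h0⟩ = 0 → c ⟨1,h1⟩ = 0 → Zm n c *ᵥ E n 1 = -c := by
    intro c hc0 hc1
    have hcd1 : c ⬝ᵥ E n 1 = 0 := by rw [dot_E 1 h1]; exact hc1
    have hcd0 : E n 0 ⬝ᵥ c = 0 := by rw [E_dot 0 h0]; exact hc0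
    have hJc1 : (Jm n *ᵥ c) ⬝ᵥ E n 1 = 0 := by
      rw [dotProduct_comm, dot_J_swap, hJ1, neg_dotProduct, neg_neg, hcd0]
    simp only [Zm, Matrix.sub_mulVec, Matrix.add_mulVec, vmv_mulVec, hcd1, hE11, hJc1,
      hE01, zero_smul, one_smul]
    abel
  have hc0 : (Matrix.trace D • v₀ - D *ᵥ v₀) ⟨0,h0⟩ = 0 := by
    simp only [Pi.sub_apply, Pi.smul_apply, smul_eq_mul]
    rw [hv ⟨0,h0⟩ (by norm_num), hDrow v₀ ⟨0,h0⟩ (by norm_num)]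
    ring
  have hc1 : (Matrix.trace D • v₀ - D *ᵥ v₀) ⟨1,h1⟩ = 0 := by
    simp only [Pi.sub_apply, Pi.smul_apply, smul_eq_mul]
    rw [hv ⟨1,h1⟩ (by norm_num), hDrow v₀ ⟨1,h1⟩ (by norm_num)]
    ring
  constructor
  · intro h
    have hz : Zm n (Matrix.trace D • v₀ - D *ᵥ v₀) = 0 := by
      rw [← hcomMM, h, sub_self]
    have hcz : Matrix.trace D • v₀ - D *ᵥ v₀ = 0 := by
      have h4 := hZcol _ hc0 hc1
      rw [hz, Matrix.zero_mulVec] at h4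
      rw [← neg_neg (Matrix.trace D • v₀ - D *ᵥ v₀), ← h4, neg_zero]
    rw [← sub_eq_zero]
    rw [← neg_sub]
    rw [hcz, neg_zero]
  · intro h
    have hcz : Matrix.trace D • v₀ - D *ᵥ v₀ = 0 := by rw [h]; exact sub_self _
    have hZ0 : Zm n (0 : G n) = 0 := by
      simp [Zm, Matrix.mulVec_zero, vmv_zero_left, vmv_zero_right]
    have : Jm n * MM - MM * Jm n = 0 := by rw [hcomMM, hcz, hZ0]
    rw [← sub_eq_zero]
    exact this
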